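/- Let U(x) = (1 + m/|x| + (m² - q²)/(4|x|²))^{1/2} on ℝ³ \ {0}, with m ≥ |q|. Then U satisfies Δ U = -(1/4) |E_δ|² U^{-3}, where E_δ = q ∇(1/|x|), i.e., |E_δ|² = q²/|x|⁴, and Δ is the Euclidean Laplacian. -/

import Mathlib

/-- The Reissner–Nordström conformal factor in isotropic coordinates,
as a radial function of `s = |x|`. -/
noncomputable def rnU (m q : ℝ) : ℝ → ℝ :=
  fun s => Real.sqrt (1 + m / s + (m^2 - q^2) / (4 * s^2))

/-- `U` solves the Lichnerowicz equation `Δ U = -(1/4)|E_δ|² U⁻³` with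
`|E_δ|² = q²/s⁴`, where `Δ` is the Euclidean Laplacian acting on the radial
function `U(s)`, i.e. `ΔU = U'' + (2/s)U'`. -/
theorem rnU_solves_lichnerowicz (m q : ℝ) (hmq : |q| ≤ m) :
    ∀ s : ℝ, 0 < s →
      deriv (deriv (rnU m q)) s + (2 / s) * deriv (rnU m q) s
        = -(1/4) * (q^2 / s^4) * (rnU m q s)⁻¹ ^ 3 := by
  intro s hs
  have hm : 0 ≤ m := le_trans (abs_nonneg q) hmq
  have hc : 0 ≤ m ^ 2 - q ^ 2 := by nlinarith [sq_abs q, abs_nonneg q]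
  set c := m ^ 2 - q ^ 2 with hcdef
  have hfpos : ∀ t : ℝ, 0 < t → 0 < 1 + m / t + c / (4 * t ^ 2) := by
    intro t ht
    have h1 : 0 ≤ m / t := div_nonneg hm ht.le
    have h2 : 0 ≤ c / (4 * t ^ 2) := div_nonneg hc (by positivity)
    linarith
  -- derivative of the inner function f
  have hDf : ∀ t : ℝ, 0 < t →
      HasDerivAt (fun t : ℝ => 1 + m / t + c / (4 * t ^ 2))
        (-(m / t ^ 2) - c / (2 * t ^ 3)) t := by
    intro t ht
    have h1 : HasDerivAt (fun t : ℝ => m / t) (-(m / t ^ 2)) t := by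
      have h := (hasDerivAt_const t m).div (hasDerivAt_id t) ht.ne'
      refine h.congr_deriv ?_
      simp only [id]; field_simp; ring
    have hden : HasDerivAt (fun t : ℝ => 4 * t ^ 2) (4 * (2 * t ^ 1)) t := by
      simpa using (hasDerivAt_pow 2 t).const_mul 4
    have h2 : HasDerivAt (fun t : ℝ => c / (4 * t ^ 2)) (-(c / (2 * t ^ 3))) t := by
      have h := (hasDerivAt_const t c).div hden (by positivity)
      refine h.congr_deriv ?_
      field_simp
      ring
    have h := ((hasDerivAt_const t (1:ℝ)).add h1).add h2
    refine h.congr_deriv ?_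
    ring
  -- first derivative of rnU
  have hU : ∀ t : ℝ, 0 < t →
      HasDerivAt (rnU m q)
        ((-(m / t ^ 2) - c / (2 * t ^ 3)) /
          (2 * Real.sqrt (1 + m / t + c / (4 * t ^ 2)))) t := by
    intro t ht
    exact (hDf t ht).sqrt (hfpos t ht).ne'
  set g : ℝ → ℝ := fun t =>
    (-(m / t ^ 2) - c / (2 * t ^ 3)) /
      (2 * Real.sqrt (1 + m / t + c / (4 * t ^ 2))) with hgdef
  have hEq : deriv (rnU m q) =ᶠ[nhds s] g := by
    filter_upwards [Ioi_mem_nhds hs] with t ht using (hU t ht).deriv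
  have hd1 : deriv (rnU m q) s = g s := (hU s hs).deriv
  have hd2 : deriv (deriv (rnU m q)) s = deriv g s := hEq.deriv_eq
  -- derivative of g
  have hN : HasDerivAt (fun t : ℝ => -(m / t ^ 2) - c / (2 * t ^ 3))
      (2 * m / s ^ 3 + 3 * c / (2 * s ^ 4)) s := by
    have hn1 : HasDerivAt (fun t : ℝ => m / t ^ 2) (-(2 * m / s ^ 3)) s := by
      have h := (hasDerivAt_const s m).div (hasDerivAt_pow 2 s) (pow_ne_zero 2 hs.ne')
      refine h.congr_deriv ?_
      field_simp
      ring
    have hden : HasDerivAt (fun t : ℝ => 2 * t ^ 3) (2 * (3 * s ^ 2)) s := by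
      simpa using (hasDerivAt_pow 3 s).const_mul 2
    have hn2 : HasDerivAt (fun t : ℝ => c / (2 * t ^ 3)) (-(3 * c / (2 * s ^ 4))) s := by
      have h := (hasDerivAt_const s c).div hden (by positivity)
      refine h.congr_deriv ?_
      field_simp
      ring
    have h := hn1.neg.sub hn2
    refine h.congr_deriv ?_
    ring
  have hsqrt_pos : 0 < Real.sqrt (1 + m / s + c / (4 * s ^ 2)) :=
    Real.sqrt_pos.mpr (hfpos s hs)
  have hD : HasDerivAt (fun t : ℝ => 2 * Real.sqrt (1 + m / t + c / (4 * t ^ 2)))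
      (2 * ((-(m / s ^ 2) - c / (2 * s ^ 3)) /
        (2 * Real.sqrt (1 + m / s + c / (4 * s ^ 2))))) s :=
    ((hDf s hs).sqrt (hfpos s hs).ne').const_mul 2
  have hg : HasDerivAt g
      (((2 * m / s ^ 3 + 3 * c / (2 * s ^ 4)) *
          (2 * Real.sqrt (1 + m / s + c / (4 * s ^ 2))) -
        (-(m / s ^ 2) - c / (2 * s ^ 3)) *
          (2 * ((-(m / s ^ 2) - c / (2 * s ^ 3)) /
            (2 * Real.sqrt (1 + m / s + c / (4 * s ^ 2)))))) /
        (2 * Real.sqrt (1 + m / s + c / (4 * s ^ 2))) ^ 2) s :=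
    hN.div hD (by positivity)
  rw [hd2, hd1, hg.deriv, hgdef]
  have hrn : rnU m q s = Real.sqrt (1 + m / s + c / (4 * s ^ 2)) := by
    rw [rnU, hcdef]
  rw [hrn]
  have hq2 : q ^ 2 = m ^ 2 - c := by rw [hcdef]; ring
  rw [hq2]
  have hw2 : Real.sqrt (1 + m / s + c / (4 * s ^ 2)) ^ 2 = 1 + m / s + c / (4 * s ^ 2) :=
    Real.sq_sqrt (hfpos s hs).le
  beta_reduce
  generalize hgen : Real.sqrt (1 + m / s + c / (4 * s ^ 2)) = w at hw2 hsqrt_pos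
  have hsne : s ≠ 0 := hs.ne'
  have hwne : w ≠ 0 := hsqrt_pos.ne'
  field_simp
  have hw2' : w ^ 2 * (4 * s ^ 2) = 4 * s ^ 2 + 4 * m * s + c := by
    rw [hw2]; field_simp
  linear_combination 4 * c * hw2'
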